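/- Let x ∈ ℝ^k be sampled from the Generalized Gaussian GGauss(p, σ) for p ≥ 1, σ > 0, i.e. with density proportional to exp(-(‖x‖_p/σ)^p). Then the random variable R = (‖x‖_p/σ)^p has the Gamma(k/p) distribution, i.e. density R^{k/p - 1} e^{-R} / Γ(k/p) on (0, ∞). -/

import Mathlib

open MeasureTheory ProbabilityTheory Set
open scoped ENNReal NNReal

theorem stmt_16 (k : ℕ) (hk : 1 ≤ k) (p σ : ℝ) (hp : 1 ≤ p) (hσ : 0 < σ) :
    let lpNorm : (Fin k → ℝ) → ℝ := fun x => (∑ i, |x i| ^ p) ^ (1 / p)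
    let μg : Measure (Fin k → ℝ) :=
      volume.withDensity fun x => ENNReal.ofReal (Real.exp (-(lpNorm x / σ) ^ p))
    let ν : Measure (Fin k → ℝ) := (μg Set.univ)⁻¹ • μg
    Measure.map (fun x => (lpNorm x / σ) ^ p) ν = gammaMeasure ((k : ℝ) / p) 1 := by
  intro lpNorm μg ν
  have : Nonempty (Fin k) := ⟨⟨0, hk⟩⟩
  have hp0 : (0:ℝ) < p := by linarith
  set a : ℝ := (k : ℝ) / p with ha_def
  have ha : 0 < a := div_pos (by exact_mod_cast hk) hp0
  set f : (Fin k → ℝ) → ℝ := fun x => (lpNorm x / σ) ^ p with hf_def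
  have hN : Measurable lpNorm :=
    (Finset.measurable_sum _ fun i _ => ((measurable_pi_apply i).abs.pow_const p)).pow_const (1/p)
  have hf : Measurable f := (hN.div_const σ).pow_const p
  have hNnonneg : ∀ x, 0 ≤ lpNorm x := fun x =>
    Real.rpow_nonneg (Finset.sum_nonneg fun i _ => Real.rpow_nonneg (abs_nonneg _) _) _
  have hfnonneg : ∀ x, 0 ≤ f x :=
    fun x => Real.rpow_nonneg (div_nonneg (hNnonneg x) hσ.le) _
  set c : ℝ := (2 * Real.Gamma (1/p+1))^k / Real.Gamma ((k:ℝ)/p + 1) with hc_def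
  have hc : 0 < c := by
    apply div_pos
    · exact pow_pos (by positivity) _
    · exact Real.Gamma_pos_of_pos (by positivity)
  set K : ℝ := c * σ ^ k * a with hK_def
  have hK : 0 < K := by positivity
  set D : ℝ → ℝ≥0∞ :=
    fun t => Set.indicator (Ioi 0) (fun s => ENNReal.ofReal (K * s ^ (a-1))) t with hD_def
  have hD : Measurable D :=
    (measurable_const.mul (measurable_id.pow_const (a-1))).ennreal_ofReal.indicator measurableSet_Ioi
  -- Step 1: pushforward of Lebesgue measure under f
  have claim1 : ∀ t : ℝ, Measure.map f volume (Iic t)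
      = if 0 ≤ t then ENNReal.ofReal (c * σ ^ k * t ^ a) else 0 := by
    intro t
    rw [Measure.map_apply hf measurableSet_Iic]
    rcases le_or_gt 0 t with ht | ht
    · rw [if_pos ht]
      have hpre : f ⁻¹' Iic t
          = {x : Fin k → ℝ | (∑ i, |x i| ^ p) ^ (1 / p) ≤ σ * t ^ (1/p)} := by
        ext x
        simp only [mem_preimage, mem_Iic, mem_setOf_eq]
        have h1 : f x ≤ t ↔ lpNorm x / σ ≤ t ^ p⁻¹ :=
          (Real.le_rpow_inv_iff_of_pos (div_nonneg (hNnonneg x) hσ.le) ht hp0).symm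
        rw [h1, div_le_iff₀ hσ,
          show (∑ i, |x i| ^ p) ^ (1/p) = lpNorm x from rfl, one_div, mul_comm]
      rw [hpre, MeasureTheory.volume_sum_rpow_le (Fin k) hp (σ * t ^ (1/p))]
      have hr : 0 ≤ σ * t ^ (1/p) := by positivity
      rw [Fintype.card_fin, ← ENNReal.ofReal_pow hr, ← ENNReal.ofReal_mul (by positivity)]
      congr 1
      rw [mul_pow, ← Real.rpow_natCast (t ^ (1/p)) k, ← Real.rpow_mul ht]
      rw [hc_def, ha_def]
      ring_nf
    · rw [if_neg (not_le.mpr ht)]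
      have : f ⁻¹' Iic t = ∅ := by
        ext x
        simp only [mem_preimage, mem_Iic, mem_empty_iff_false, iff_false, not_le]
        exact lt_of_lt_of_le ht (hfnonneg x)
      rw [this, measure_empty]
  have claim2 : ∀ t : ℝ, volume.withDensity D (Iic t)
      = if 0 ≤ t then ENNReal.ofReal (c * σ ^ k * t ^ a) else 0 := by
    intro t
    rw [withDensity_apply _ measurableSet_Iic, hD_def]
    rw [lintegral_indicator measurableSet_Ioi, Measure.restrict_restrict measurableSet_Ioi,
      Ioi_inter_Iic]
    rcases le_or_gt 0 t with ht | ht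
    · rw [if_pos ht]
      have hInt : IntegrableOn (fun s : ℝ => K * s ^ (a-1)) (Ioc 0 t) volume := by
        have := (intervalIntegral.intervalIntegrable_rpow'
          (a := 0) (b := t) (r := a - 1) (by linarith)).const_mul K
        exact (intervalIntegrable_iff_integrableOn_Ioc_of_le ht).mp this
      rw [← ofReal_integral_eq_lintegral_ofReal hInt]
      · congr 1
        rw [← intervalIntegral.integral_of_le ht, intervalIntegral.integral_const_mul,
          integral_rpow (Or.inl (by linarith : (-1:ℝ) < a - 1))]
        rw [sub_add_cancel, Real.zero_rpow ha.ne', sub_zero, hK_def]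
        field_simp
      · filter_upwards [ae_restrict_mem measurableSet_Ioc] with s hs
        have : (0:ℝ) ≤ s ^ (a - 1) := Real.rpow_nonneg hs.1.le _
        positivity
    · rw [if_neg (not_le.mpr ht), Ioc_eq_empty (by intro h; exact absurd (h.trans ht) (lt_irrefl 0)),
        Measure.restrict_empty, lintegral_zero_measure]
  have step1 : Measure.map f volume = volume.withDensity D := by
    refine MeasureTheory.Measure.ext_of_generateFrom_of_iUnion
      (Set.range Iic) (fun n : ℕ => Iic (n : ℝ)) ?_ isPiSystem_Iic ?_
      (fun n => mem_range_self _) ?_ ?_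
    · exact (BorelSpace.measurable_eq (α := ℝ)).trans (borel_eq_generateFrom_Iic ℝ)
    · exact iUnion_eq_univ_iff.mpr fun x => ⟨⌈x⌉₊, mem_Iic.mpr (Nat.le_ceil x)⟩
    · intro n
      rw [claim1]
      split <;> simp [ENNReal.ofReal_ne_top]
    · rintro s ⟨t, rfl⟩
      rw [claim1, claim2]
  -- Step 2: pushforward of μg
  set h : ℝ → ℝ≥0∞ := fun t => ENNReal.ofReal (Real.exp (-t)) with hh_def
  have hh : Measurable h := (Real.measurable_exp.comp measurable_neg).ennreal_ofReal
  have step2 : Measure.map f μg = (Measure.map f volume).withDensity h := by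
    ext s hs
    rw [Measure.map_apply hf hs, withDensity_apply _ hs,
      MeasureTheory.setLIntegral_map hs hh hf]
    show μg (f ⁻¹' s) = _
    rw [show μg = volume.withDensity (fun x => h (f x)) from rfl,
      withDensity_apply _ (hf hs)]
  have step3 : Measure.map f μg = volume.withDensity (fun t => D t * h t) := by
    rw [step2, step1, ← withDensity_mul _ hD hh]; rfl
  -- total mass
  have mass : μg Set.univ = ENNReal.ofReal (K * Real.Gamma a) := by
    have : μg Set.univ = Measure.map f μg Set.univ := by
      rw [Measure.map_apply hf MeasurableSet.univ, preimage_univ]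
    rw [this, step3, withDensity_apply _ MeasurableSet.univ, Measure.restrict_univ]
    have : ∀ t : ℝ, D t * h t
        = Set.indicator (Ioi 0) (fun s => ENNReal.ofReal (K * s ^ (a-1) * Real.exp (-s))) t := by
      intro t
      simp only [hD_def, hh_def]
      by_cases ht : t ∈ Ioi (0:ℝ)
      · rw [indicator_of_mem ht, indicator_of_mem ht,
          ← ENNReal.ofReal_mul (by have := Real.rpow_nonneg (le_of_lt ht) (a-1); positivity)]
      · rw [indicator_of_notMem ht, indicator_of_notMem ht, zero_mul]
    simp_rw [this]
    rw [lintegral_indicator measurableSet_Ioi]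
    have hfun : (fun s : ℝ => K * s ^ (a-1) * Real.exp (-s))
        = fun s : ℝ => K * (Real.exp (-s) * s ^ (a-1)) := by funext s; ring
    have hInt : IntegrableOn (fun s : ℝ => K * s ^ (a-1) * Real.exp (-s)) (Ioi 0) volume := by
      rw [hfun]; exact (Real.GammaIntegral_convergent ha).const_mul K
    rw [← ofReal_integral_eq_lintegral_ofReal hInt]
    · congr 1
      rw [hfun, integral_const_mul, ← Real.Gamma_eq_integral ha]
    · filter_upwards [ae_restrict_mem measurableSet_Ioi] with s hs
      have : (0:ℝ) ≤ s ^ (a - 1) := Real.rpow_nonneg (le_of_lt hs) _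
      positivity
  -- finish
  have hZ : (0:ℝ) < K * Real.Gamma a := mul_pos hK (Real.Gamma_pos_of_pos ha)
  rw [show ν = (μg Set.univ)⁻¹ • μg from rfl, Measure.map_smul, step3, mass]
  rw [show gammaMeasure ((k:ℝ)/p) 1 = volume.withDensity (gammaPDF a 1) from rfl]
  rw [← withDensity_smul _ (f := fun t => D t * h t) ((hD.mul hh))]
  apply withDensity_congr_ae
  filter_upwards [compl_mem_ae_iff.mpr (Real.volume_singleton (a := (0:ℝ)))] with t ht0
  have ht0 : t ≠ 0 := ht0
  rcases lt_or_gt_of_ne ht0 with ht | ht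
  · have h1 : D t = 0 := by
      have hmem : t ∉ Ioi (0:ℝ) := fun hmem => absurd (mem_Ioi.mp hmem) (not_lt.mpr ht.le)
      simp only [hD_def]
      exact indicator_of_notMem hmem _
    simp [h1, gammaPDF_of_neg ht]
  · have h1 : D t = ENNReal.ofReal (K * t ^ (a-1)) := by
      simp only [hD_def]
      exact indicator_of_mem (mem_Ioi.mpr ht) _
    rw [Pi.smul_apply, h1, smul_eq_mul]
    show (ENNReal.ofReal (K * Real.Gamma a))⁻¹ *
        (ENNReal.ofReal (K * t ^ (a-1)) * ENNReal.ofReal (Real.exp (-t))) = _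
    rw [gammaPDF_of_nonneg ht.le,
      ← ENNReal.ofReal_mul (by have := Real.rpow_nonneg ht.le (a-1); positivity),
      mul_comm ((ENNReal.ofReal (K * Real.Gamma a))⁻¹) _, ← div_eq_mul_inv,
      ← ENNReal.ofReal_div_of_pos hZ]
    congr 1
    rw [Real.one_rpow, one_mul]
    have hΓ : Real.Gamma a ≠ 0 := (Real.Gamma_pos_of_pos ha).ne'
    field_simp
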